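/- The mold L given by λ_i = log₂(i+1) is not fractal. In particular, the fractality condition fails already between the second and third periods: (λ₂ − λ₁)/(λ₃ − λ₁) ≠ (λ₄ − λ₃)/(λ₅ − λ₃), i.e. (log₂(3/2))² ≠ log₂(5/4). -/

import Mathlib

/-- The sequence `λ_i = log₂ (i + 1)`. -/
noncomputable def Lseq : ℕ → ℝ := fun i => Real.logb 2 (i + 1)

/-- The `i`-th period of a (normalized) mold `μ`: elements `x` of the mold with `i ≤ x < i + 1`. -/
def period (μ : ℕ → ℝ) (i : ℕ) : Set ℝ :=
  {x | (∃ k, μ k = x) ∧ (i : ℝ) ≤ x ∧ x < (i : ℝ) + 1}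

/-- A normalized mold is fractal if its periods can be enumerated as
`π_i = {i + τ^{(i)}_0, …, i + τ^{(i)}_{l_i - 1}}` with
`0 = τ^{(i)}_0 < ⋯ < τ^{(i)}_{l_i - 1} < τ^{(i)}_{l_i} = 1`, and each period is obtained by
dividing each interval of the previous one in the same proportions as the first period divides
`[0, 1]`:
`π_{i+1} = ⋃_{r < l_i} ⋃_{s < l} {(i+1) + τ^{(i)}_r + τ^{(1)}_s (τ^{(i)}_{r+1} - τ^{(i)}_r)}`. -/
def IsFractal (μ : ℕ → ℝ) : Prop :=
  ∃ (l : ℕ → ℕ) (τ : ℕ → ℕ → ℝ),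
    (∀ i, 0 < l i) ∧
    (∀ i, τ i 0 = 0) ∧
    (∀ i, τ i (l i) = 1) ∧
    (∀ i, ∀ r s : ℕ, r < s → s ≤ l i → τ i r < τ i s) ∧
    (∀ i, period μ i = {x | ∃ r < l i, x = (i : ℝ) + τ i r}) ∧
    (∀ i, period μ (i + 1) =
      {x | ∃ r < l i, ∃ s < l 1, x = ((i : ℝ) + 1) + τ i r + τ 1 s * (τ i (r + 1) - τ i r)})

private lemma logb2_two : Real.logb 2 2 = 1 := Real.logb_self_eq_one one_lt_two

private lemma logb2_four : Real.logb 2 4 = 2 := by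
  rw [show (4:ℝ) = 2 ^ (2:ℕ) by norm_num, Real.logb_pow, logb2_two]; norm_num

private lemma logb2_eight : Real.logb 2 8 = 3 := by
  rw [show (8:ℝ) = 2 ^ (3:ℕ) by norm_num, Real.logb_pow, logb2_two]; norm_num

private lemma c_pos : 0 < Real.logb 2 (3/2) := Real.logb_pos one_lt_two (by norm_num)

private lemma c_lt_one : Real.logb 2 (3/2) < 1 := by
  have := Real.logb_lt_logb (b := 2) one_lt_two (show (0:ℝ) < 3/2 by norm_num)
    (show (3:ℝ)/2 < 2 by norm_num)
  rwa [logb2_two] at this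

private lemma d_pos : 0 < Real.logb 2 (5/4) := Real.logb_pos one_lt_two (by norm_num)

private lemma d_lt_c : Real.logb 2 (5/4) < Real.logb 2 (3/2) :=
  Real.logb_lt_logb one_lt_two (by norm_num) (by norm_num)

private lemma c_eq : Real.logb 2 (3/2) = Real.logb 2 3 - 1 := by
  rw [Real.logb_div (by norm_num) (by norm_num), logb2_two]

private lemma d_eq : Real.logb 2 (5/4) = Real.logb 2 5 - 2 := by
  rw [Real.logb_div (by norm_num) (by norm_num), logb2_four]

/-- The key numerical inequality: `log₂(5/4) < (log₂(3/2))²`. -/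
private lemma key : Real.logb 2 (5/4) < (Real.logb 2 (3/2)) ^ 2 := by
  have h1 : (29/50 : ℝ) < Real.logb 2 (3/2) := by
    have hp : (2:ℝ) ^ (29:ℕ) < (3/2:ℝ) ^ (50:ℕ) := by norm_num
    have h := Real.logb_lt_logb (b := 2) one_lt_two (by positivity) hp
    rw [Real.logb_pow, Real.logb_pow, logb2_two] at h
    push_cast at h
    linarith
  have h2 : Real.logb 2 (5/4) < 841/2500 := by
    have hp : (5/4:ℝ) ^ (2500:ℕ) < (2:ℝ) ^ (841:ℕ) := by
      have h : (5:ℕ) ^ 2500 < 2 ^ 841 * 4 ^ 2500 := by decide +kernel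
      rw [div_pow, div_lt_iff₀ (by positivity)]; exact_mod_cast h
    have h := Real.logb_lt_logb (b := 2) one_lt_two (by positivity) hp
    rw [Real.logb_pow, Real.logb_pow, logb2_two] at h
    push_cast at h
    linarith
  nlinarith [h1, h2]

private lemma period_one_sub : ∀ x ∈ period Lseq 1, x = 1 ∨ x = Real.logb 2 3 := by
  rintro x ⟨⟨k, hk⟩, h1, h2⟩
  have hk' : Real.logb 2 ((k:ℝ) + 1) = x := hk
  have hkpos : (0:ℝ) < (k:ℝ) + 1 := by positivity
  push_cast at h1 h2
  have hklt : (k:ℝ) + 1 < 4 := by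
    have h4 : Real.logb 2 ((k:ℝ) + 1) < Real.logb 2 4 := by rw [hk', logb2_four]; linarith
    exact (Real.logb_lt_logb_iff (b := 2) one_lt_two hkpos (by norm_num)).mp h4
  have hkge : (2:ℝ) ≤ (k:ℝ) + 1 := by
    by_contra h
    push_neg at h
    have := Real.logb_lt_logb (b := 2) one_lt_two hkpos h
    rw [hk', logb2_two] at this
    linarith
  have hk1 : 1 ≤ k := by exact_mod_cast (by linarith : (1:ℝ) ≤ (k:ℝ))
  have hk2 : k ≤ 2 := by
    have : (k:ℝ) < 3 := by linarith
    exact_mod_cast Nat.lt_succ_iff.mp (by exact_mod_cast this)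
  interval_cases k
  · left; rw [← hk']; norm_num [logb2_two]
  · right; rw [← hk']; norm_num

private lemma mem_period_one : Real.logb 2 3 ∈ period Lseq 1 := by
  refine ⟨⟨2, by norm_num [Lseq]⟩, ?_, ?_⟩
  · have h : Real.logb 2 2 ≤ Real.logb 2 3 :=
      Real.logb_le_logb_of_le (b := 2) one_lt_two (by norm_num) (by norm_num)
    rw [logb2_two] at h
    push_cast
    linarith
  · have h : Real.logb 2 3 < Real.logb 2 4 :=
      Real.logb_lt_logb (b := 2) one_lt_two (by norm_num) (by norm_num)
    rw [logb2_four] at h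
    push_cast
    linarith

private lemma mem_period_two : Real.logb 2 5 ∈ period Lseq 2 := by
  refine ⟨⟨4, by norm_num [Lseq]⟩, ?_, ?_⟩
  · have h : Real.logb 2 4 ≤ Real.logb 2 5 :=
      Real.logb_le_logb_of_le (b := 2) one_lt_two (by norm_num) (by norm_num)
    rw [logb2_four] at h
    push_cast
    linarith
  · have h : Real.logb 2 5 < Real.logb 2 8 :=
      Real.logb_lt_logb (b := 2) one_lt_two (by norm_num) (by norm_num)
    rw [logb2_eight] at h
    push_cast
    linarith

private lemma not_fractal : ¬ IsFractal Lseq := by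
  rintro ⟨l, τ, hl, hτ0, hτl, hmono, hper, hfrac⟩
  set c := Real.logb 2 (3/2) with hc
  set d := Real.logb 2 (5/4) with hd
  -- every τ 1 r with r < l 1 is 0 or c
  have hτval : ∀ r < l 1, τ 1 r = 0 ∨ τ 1 r = c := by
    intro r hr
    have hx : ((1:ℝ) + τ 1 r) ∈ period Lseq 1 := by
      rw [hper 1]
      exact ⟨r, hr, by push_cast; ring⟩
    rcases period_one_sub _ hx with h | h
    · left; linarith
    · right; rw [hc, c_eq]; linarith
  -- c is attained
  have hca : ∃ r < l 1, τ 1 r = c := by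
    have hx : Real.logb 2 3 ∈ {x | ∃ r < l 1, x = ((1:ℕ):ℝ) + τ 1 r} := by
      rw [← hper 1]; exact mem_period_one
    obtain ⟨r, hr, hxr⟩ := hx
    refine ⟨r, hr, ?_⟩
    rw [hc, c_eq]
    push_cast at hxr
    linarith
  obtain ⟨r0, hr0, hr0c⟩ := hca
  have hr0ne : r0 ≠ 0 := by
    intro h
    rw [h, hτ0 1] at hr0c
    exact absurd hr0c.symm (ne_of_gt c_pos)
  have hl1ge2 : 2 ≤ l 1 := by omega
  -- l 1 = 2
  have hl1 : l 1 = 2 := by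
    by_contra h
    have h3 : 3 ≤ l 1 := by omega
    have h01 : τ 1 0 < τ 1 1 := hmono 1 0 1 (by omega) (by omega)
    have h12 : τ 1 1 < τ 1 2 := hmono 1 1 2 (by omega) (by omega)
    rw [hτ0 1] at h01
    have hv1 := hτval 1 (by omega)
    have hv2 := hτval 2 (by omega)
    rcases hv1 with h1 | h1
    · linarith
    · rcases hv2 with h2 | h2
      · have := c_pos; rw [← hc] at this; linarith
      · rw [h1, h2] at h12; exact lt_irrefl _ h12
  have hτ11 : τ 1 1 = c := by
    have h01 : τ 1 0 < τ 1 1 := hmono 1 0 1 (by omega) (by omega)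
    rw [hτ0 1] at h01
    rcases hτval 1 (by omega) with h | h
    · linarith
    · exact h
  have hτ12 : τ 1 2 = 1 := by rw [← hl1]; exact hτl 1
  -- now use the fractal condition at i = 1
  have hx : Real.logb 2 5 ∈
      {x | ∃ r < l 1, ∃ s < l 1, x = (((1:ℕ):ℝ) + 1) + τ 1 r + τ 1 s * (τ 1 (r + 1) - τ 1 r)} := by
    rw [← hfrac 1]; exact mem_period_two
  obtain ⟨r, hr, s, hs, hxe⟩ := hx
  have hde : d = τ 1 r + τ 1 s * (τ 1 (r + 1) - τ 1 r) := by
    rw [hd, d_eq]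
    push_cast at hxe
    linarith
  rw [hl1] at hr hs
  have hcp : 0 < c := c_pos
  have hc1 : c < 1 := c_lt_one
  have hdp : 0 < d := d_pos
  have hdc : d < c := d_lt_c
  have hkey : d < c ^ 2 := key
  interval_cases r <;> interval_cases s <;>
    simp only [hτ0 1, hτ11, hτ12] at hde <;> nlinarith [hde, hcp, hc1, hdp, hdc, hkey]

/-- the mold `L` with `λ_i = log₂ (i+1)` is not fractal; in particular the
fractality condition fails already between the second and third periods:
`(λ₂ - λ₁)/(λ₃ - λ₁) ≠ (λ₄ - λ₃)/(λ₅ - λ₃)`, i.e. `(log₂ (3/2))² ≠ log₂ (5/4)`. -/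
theorem Lseq_not_fractal :
    ¬ IsFractal Lseq ∧
    (Lseq 2 - Lseq 1) / (Lseq 3 - Lseq 1) ≠ (Lseq 4 - Lseq 3) / (Lseq 5 - Lseq 3) ∧
    (Real.logb 2 (3 / 2)) ^ 2 ≠ Real.logb 2 (5 / 4) := by
  have hkey : Real.logb 2 (5/4) < (Real.logb 2 (3/2)) ^ 2 := key
  have h3 : (Real.logb 2 (3 / 2)) ^ 2 ≠ Real.logb 2 (5 / 4) := by
    intro h; rw [h] at hkey; exact lt_irrefl _ hkey
  refine ⟨not_fractal, ?_, h3⟩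
  have e1 : Lseq 1 = 1 := by simp [Lseq, logb2_two]; norm_num [logb2_two]
  have e3 : Lseq 3 = 2 := by
    show Real.logb 2 ((3:ℕ) + 1) = 2
    norm_num [logb2_four]
  have e2 : Lseq 2 = Real.logb 2 3 := by norm_num [Lseq]
  have e4 : Lseq 4 = Real.logb 2 5 := by norm_num [Lseq]
  have e5 : Lseq 5 = Real.logb 2 6 := by norm_num [Lseq]
  have e6 : Real.logb 2 6 - 2 = Real.logb 2 (3/2) := by
    rw [show (3:ℝ)/2 = 6/4 by norm_num, Real.logb_div (by norm_num) (by norm_num), logb2_four]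
  rw [e1, e2, e3, e4, e5]
  intro h
  rw [show Real.logb 2 3 - 1 = Real.logb 2 (3/2) by rw [c_eq]] at h
  have h5 : Real.logb 2 5 - 2 = Real.logb 2 (5/4) := by rw [d_eq]
  rw [h5] at h
  have hcne : Real.logb 2 6 - 2 ≠ 0 := by rw [e6]; exact ne_of_gt c_pos
  rw [div_eq_div_iff (by norm_num) hcne] at h
  rw [e6] at h
  apply h3
  rw [pow_two]
  linarith [h]
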